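/- Let θ > 0 and P ∼ GEM(θ). Then for every r ≥ 1, all distinct positive integers i₁,…,i_r, all nonnegative reals η₁,…,η_r with Σ_{j=1}^r η_j ≤ 1, and every δ > 0, P(P_{i_j} > η_j − δ for all 1 ≤ j ≤ r) > 0. -/

import Mathlib

open MeasureTheory ProbabilityTheory Matrix Filter

noncomputable section

/-- The Beta(1,θ) law on ℝ: density θ(1-x)^(θ-1) on [0,1]. -/
def beta1 (θ : ℝ) : Measure ℝ :=
  (volume.restrict (Set.Icc (0:ℝ) 1)).withDensity fun x => ENNReal.ofReal (θ * (1-x)^(θ-1))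

/-- Stick lengths of a residual allocation model: `stick X j` is `P_{j+1}`. -/
def stick {Ω : Type*} (X : ℕ → Ω → ℝ) (j : ℕ) (ω : Ω) : ℝ :=
  X j ω * ∏ i ∈ Finset.range j, (1 - X i ω)

/-- The random measure ν(A) = Σ_j P_j 1{T_j ∈ A}. -/
def nuSB {Ω 𝔛 : Type*} (X : ℕ → Ω → ℝ) (T : ℕ → Ω → 𝔛) (A : Set 𝔛) (ω : Ω) : ℝ :=
  ∑' j, stick X j ω * A.indicator (fun _ => (1:ℝ)) (T j ω)

/-- Conditional expectation given an event: E[Z | E] = E[Z 1_E]/P(E). -/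
def cexp {Ω : Type*} [MeasurableSpace Ω] (Pr : Measure Ω) (Z : Ω → ℝ) (E : Set Ω) : ℝ :=
  (∫ ω in E, Z ω ∂Pr) / (Pr E).toReal

/-- Generator matrix: nonnegative off-diagonal entries, rows summing to zero. -/
def IsGenerator {𝔛 : Type*} [Fintype 𝔛] [DecidableEq 𝔛] (G : Matrix 𝔛 𝔛 ℝ) : Prop :=
  (∀ x y, x ≠ y → 0 ≤ G x y) ∧ ∀ x, G x x = -∑ y ∈ Finset.univ.erase x, G x y

/-- Irreducibility of a square matrix: some power has positive (x,y) entry for all x,y. -/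
def IrreducibleMat {𝔛 : Type*} [Fintype 𝔛] [DecidableEq 𝔛] (Q : Matrix 𝔛 𝔛 ℝ) : Prop :=
  ∀ x y, ∃ m, 1 ≤ m ∧ 0 < (Q ^ m) x y

/-- Row-stochastic matrix. -/
def IsStochastic {𝔛 : Type*} [Fintype 𝔛] (Q : Matrix 𝔛 𝔛 ℝ) : Prop :=
  (∀ x y, 0 ≤ Q x y) ∧ ∀ x, ∑ y, Q x y = 1

-- D(A): diagonal 0-1 matrix of a set.
open scoped Classical in
def DMat {𝔛 : Type*} [Fintype 𝔛] [DecidableEq 𝔛] (A : Set 𝔛) : Matrix 𝔛 𝔛 ℝ :=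
  Matrix.diagonal fun x => if x ∈ A then 1 else 0

/-- Reverse-ordered matrix product M_k ⋯ M_1 of M indexed by `Fin k` (0-based). -/
def revProd {𝔛 : Type*} [Fintype 𝔛] [DecidableEq 𝔛] {k : ℕ} (M : Fin k → Matrix 𝔛 𝔛 ℝ) :
    Matrix 𝔛 𝔛 ℝ :=
  ((List.ofFn M).reverse).prod

-- The set S(k⃗) of sequences in `α^N` with exactly `kv a` entries equal to `a`.
open scoped Classical in
def SSeq {α : Type*} [Fintype α] [DecidableEq α] (kv : α → ℕ) (N : ℕ) :
    Finset (Fin N → α) :=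
  Finset.univ.filter fun σ => ∀ a, (Finset.univ.filter fun i => σ i = a).card = kv a

end

lemma sum_max_le {α : Type*} (s : Finset α) (f : α → ℝ) (d : ℝ) (hd : 0 ≤ d)
    (hf : ∀ a ∈ s, 0 ≤ f a) :
    ∑ a ∈ s, max 0 (f a - d) ≤ max 0 (∑ a ∈ s, f a - d) := by
  classical
  induction s using Finset.induction with
  | empty => simp
  | @insert a s ha ih =>
    have hfa : 0 ≤ f a := hf a (Finset.mem_insert_self a s)
    have hS : 0 ≤ ∑ b ∈ s, f b := Finset.sum_nonneg fun b hb => hf b (Finset.mem_insert_of_mem hb)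
    have ih' := ih fun b hb => hf b (Finset.mem_insert_of_mem hb)
    rw [Finset.sum_insert ha, Finset.sum_insert ha]
    have h1 : max 0 (f a - d) + max 0 (∑ b ∈ s, f b - d) ≤ max 0 (f a + ∑ b ∈ s, f b - d) := by
      rcases le_or_gt (f a) d with h | h
      · rcases le_or_gt (∑ b ∈ s, f b) d with h2 | h2
        · have h3 : max 0 (f a - d) = 0 := max_eq_left (by linarith)
          have h4 : max 0 (∑ b ∈ s, f b - d) = 0 := max_eq_left (by linarith)
          have h5 : (0:ℝ) ≤ max 0 (f a + ∑ b ∈ s, f b - d) := le_max_left _ _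
          linarith
        · have := le_max_right (0:ℝ) (f a + ∑ b ∈ s, f b - d)
          have h3 : max 0 (f a - d) = 0 := max_eq_left (by linarith)
          have h4 : max 0 (∑ b ∈ s, f b - d) = ∑ b ∈ s, f b - d := max_eq_right (by linarith)
          rw [h3, h4]
          have : f a + ∑ b ∈ s, f b - d ≤ max 0 (f a + ∑ b ∈ s, f b - d) := le_max_right _ _
          linarith
      · have h3 : max 0 (f a - d) = f a - d := max_eq_right (by linarith)
        have h5 : max 0 (∑ b ∈ s, f b - d) ≤ ∑ b ∈ s, f b := max_le hS (by linarith)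
        have : f a + ∑ b ∈ s, f b - d ≤ max 0 (f a + ∑ b ∈ s, f b - d) := le_max_right _ _
        linarith
    linarith

lemma prod_shave (n : ℕ) (c : ℕ → ℝ) (γ : ℝ) (hγ : 0 ≤ γ)
    (hc : ∀ i < n, γ ≤ c i ∧ c i ≤ 1) :
    ∏ i ∈ Finset.range n, c i - n * γ ≤ ∏ i ∈ Finset.range n, (c i - γ) := by
  induction n with
  | zero => simp
  | succ n ih =>
    have hc' : ∀ i < n, γ ≤ c i ∧ c i ≤ 1 := fun i hi => hc i (by omega)
    have ih' := ih hc'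
    have hQ0 : 0 ≤ ∏ i ∈ Finset.range n, (c i - γ) :=
      Finset.prod_nonneg fun i hi => by
        have := hc' i (Finset.mem_range.mp hi); linarith [this.1]
    have hQ1 : ∏ i ∈ Finset.range n, (c i - γ) ≤ 1 :=
      Finset.prod_le_one (fun i hi => by
        have := hc' i (Finset.mem_range.mp hi); linarith [this.1])
        (fun i hi => by have := hc' i (Finset.mem_range.mp hi); linarith [this.2])
    have hcn := hc n (by omega)
    have hcn0 : 0 ≤ c n := le_trans hγ hcn.1
    have hP1 : ∏ i ∈ Finset.range n, c i ≤ 1 :=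
      Finset.prod_le_one (fun i hi => by
        have := hc' i (Finset.mem_range.mp hi); linarith [this.1])
        (fun i hi => (hc' i (Finset.mem_range.mp hi)).2)
    rw [Finset.prod_range_succ, Finset.prod_range_succ]
    push_cast
    nlinarith [hcn.1, hcn.2, mul_nonneg (Nat.cast_nonneg' n : (0:ℝ) ≤ n) hγ]

lemma beta1_pos {θ : ℝ} (hθ : 0 < θ) {a b : ℝ} (ha : 0 ≤ a) (hab : a < b) (hb : b ≤ 1) :
    0 < beta1 θ (Set.Ioo a b) := by
  have hsub : Set.Ioo a b ⊆ Set.Icc (0:ℝ) 1 :=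
    fun x hx => ⟨le_of_lt (lt_of_le_of_lt ha hx.1), le_of_lt (lt_of_lt_of_le hx.2 hb)⟩
  rw [beta1, withDensity_apply _ measurableSet_Ioo,
    Measure.restrict_restrict measurableSet_Ioo, Set.inter_eq_left.mpr hsub]
  rw [lintegral_pos_iff_support]
  · have hss : Set.Ioo a b ⊆ Function.support fun x => ENNReal.ofReal (θ * (1-x)^(θ-1)) := by
      intro x hx
      have hx1 : x < 1 := lt_of_lt_of_le hx.2 hb
      have : 0 < θ * (1-x)^(θ-1) :=
        mul_pos hθ (Real.rpow_pos_of_pos (by linarith) _)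
      exact Function.mem_support.mpr (ne_of_gt (ENNReal.ofReal_pos.mpr this))
    calc (0:ENNReal) < volume (Set.Ioo a b) := by
            rw [Real.volume_Ioo]; exact ENNReal.ofReal_pos.mpr (by linarith)
      _ = (volume.restrict (Set.Ioo a b)) (Set.Ioo a b) := by
            rw [Measure.restrict_apply measurableSet_Ioo]; simp
      _ ≤ _ := measure_mono hss
  · exact Measurable.ennreal_ofReal (by fun_prop)

lemma key_ineq (a b g mm : ℝ) (hg : 0 < g) (ha0 : 0 < a) (ha1 : a < 1)
    (hb0 : 0 ≤ b) (hb1 : b ≤ 1) (hm : 0 ≤ mm) :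
    a * b - (mm + 1) * g ≤ (a - g) * (b - mm * g) := by
  nlinarith [mul_nonneg (mul_nonneg hm hg.le) (sub_nonneg.mpr ha1.le),
    mul_nonneg hg.le (sub_nonneg.mpr hb1), mul_nonneg hm (mul_nonneg hg.le hg.le)]

/-- Full support of the GEM(θ) stick lengths, as used in Proposition 3.7. -/
theorem stmt17
    {Ω : Type*} [MeasurableSpace Ω] (Pr : Measure Ω) [IsProbabilityMeasure Pr]
    (θ : ℝ) (hθ : 0 < θ)
    (X : ℕ → Ω → ℝ) (hXmeas : ∀ j, Measurable (X j))
    (hXiid : iIndepFun X Pr)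
    (hXlaw : ∀ j, Measure.map (X j) Pr = beta1 θ)
    (r : ℕ) (hr : 1 ≤ r) (idx : Fin r → ℕ) (hidx : Function.Injective idx)
    (η : Fin r → ℝ) (hη0 : ∀ j, 0 ≤ η j) (hη1 : ∑ j, η j ≤ 1)
    (δ : ℝ) (hδ : 0 < δ) :
    0 < Pr {ω | ∀ j, η j - δ < stick X (idx j) ω} := by
  classical
  haveI : NeZero r := ⟨by omega⟩
  set N : ℕ := (Finset.univ.sup idx) + 1 with hNdef
  have hidxN : ∀ j, idx j < N :=
    fun j => Nat.lt_succ_of_le (Finset.le_sup (Finset.mem_univ j))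
  have hN1 : 1 ≤ N := by omega
  set d : ℝ := min (δ/2) (1/2) with hdDef
  have hd0 : 0 < d := lt_min (by linarith) (by norm_num)
  have hdδ : d ≤ δ/2 := min_le_left _ _
  have hd1 : d ≤ 1/2 := min_le_right _ _
  set ε : ℝ := d / (2*(N+1)) with hεDef
  have hε0 : 0 < ε := by positivity
  set q : ℕ → ℝ := fun i => ∑ j, if idx j = i then η j - d else 0 with hqDef
  set p : ℕ → ℝ := fun i => max ε (q i) with hpDef
  have hp0 : ∀ i, 0 < p i := fun i => lt_of_lt_of_le hε0 (le_max_left _ _)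
  have hqidx : ∀ j, q (idx j) = η j - d := by
    intro j
    rw [hqDef]
    simp only
    rw [Finset.sum_eq_single j]
    · simp
    · intro j' _ hj'
      simp only [ite_eq_right_iff]
      intro h; exact absurd (hidx h) hj'
    · simp
  have hpidx : ∀ j, η j - d ≤ p (idx j) := by
    intro j; rw [hpDef]; simp only; rw [hqidx j]; exact le_max_right _ _
  -- sum bound
  have hqmax : ∀ i, max 0 (q i) = ∑ j, max 0 (if idx j = i then η j - d else 0) := by
    intro i
    rcases em (∃ j, idx j = i) with ⟨j, hj⟩ | hno
    · have hR : ∑ j', max 0 (if idx j' = i then η j' - d else 0) = max 0 (η j - d) := by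
        rw [Finset.sum_eq_single j]
        · simp [hj]
        · intro b _ hb
          have hbi : idx b ≠ i := fun h => hb (hidx (h.trans hj.symm))
          simp [hbi]
        · intro h; exact absurd (Finset.mem_univ j) h
      rw [hR, ← hj, hqidx j]
    · push_neg at hno
      simp [hqDef, hno]
  have hsum : ∑ i ∈ Finset.range N, p i ≤ 1 - d/2 := by
    have h1 : ∀ i, p i ≤ ε + max 0 (q i) := by
      intro i
      apply max_le
      · nlinarith [le_max_left (0:ℝ) (q i)]
      · nlinarith [le_max_right (0:ℝ) (q i)]
    calc ∑ i ∈ Finset.range N, p i ≤ ∑ i ∈ Finset.range N, (ε + max 0 (q i)) :=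
          Finset.sum_le_sum fun i _ => h1 i
      _ = N * ε + ∑ i ∈ Finset.range N, max 0 (q i) := by
          rw [Finset.sum_add_distrib]; simp [mul_comm]
      _ ≤ N * ε + (1 - d) := by
          have h2 : ∑ i ∈ Finset.range N, max 0 (q i)
              = ∑ j, ∑ i ∈ Finset.range N, max 0 (if idx j = i then η j - d else 0) := by
            rw [← Finset.sum_comm]
            exact Finset.sum_congr rfl fun i _ => hqmax i
          have h3 : ∀ j : Fin r, ∑ i ∈ Finset.range N, max 0 (if idx j = i then η j - d else 0)
              = max 0 (η j - d) := by
            intro j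
            rw [Finset.sum_eq_single (idx j)]
            · simp
            · intro i _ hi
              simp [Ne.symm hi]
            · intro h; exact absurd (Finset.mem_range.mpr (hidxN j)) h
          rw [h2]
          simp_rw [h3]
          have h4 := sum_max_le Finset.univ η d (le_of_lt hd0) (fun j _ => hη0 j)
          have h5 : max 0 (∑ j, η j - d) ≤ 1 - d := max_le (by linarith) (by linarith)
          linarith
      _ ≤ 1 - d/2 := by
          have : (N:ℝ) * ε ≤ d/2 := by
            have hden : (0:ℝ) < 2 * ((N:ℝ) + 1) := by positivity
            rw [hεDef, ← mul_div_assoc, div_le_div_iff₀ hden (by norm_num : (0:ℝ) < 2)]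
            nlinarith [(by positivity : (0:ℝ) ≤ (N:ℝ))]
          linarith
  -- partial sums
  set S : ℕ → ℝ := fun i => ∑ k ∈ Finset.range i, p k with hSdef
  have hresid : ∀ i < N, p i + d/2 ≤ 1 - S i := by
    intro i hi
    have h1 : S i + p i ≤ ∑ k ∈ Finset.range N, p k := by
      have : S i + p i = ∑ k ∈ Finset.range (i+1), p k := by
        rw [hSdef]; simp [Finset.sum_range_succ]
      rw [this]
      apply Finset.sum_le_sum_of_subset_of_nonneg
      · exact Finset.range_subset_range.mpr (by omega)
      · intro k _ _; exact le_of_lt (hp0 k)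
    linarith [hsum]
  have hSnn : ∀ i, 0 ≤ S i := fun i => Finset.sum_nonneg fun k _ => le_of_lt (hp0 k)
  have hres0 : ∀ i < N, 0 < 1 - S i := by
    intro i hi; have := hresid i hi; have := hp0 i; linarith
  set x : ℕ → ℝ := fun i => p i / (1 - S i) with hxdef
  have hx0 : ∀ i < N, 0 < x i := fun i hi => div_pos (hp0 i) (hres0 i hi)
  have hx1 : ∀ i < N, x i < 1 := by
    intro i hi
    rw [hxdef]
    simp only
    rw [div_lt_one (hres0 i hi)]
    have := hresid i hi; linarith
  have hprodId : ∀ i, i ≤ N → ∏ k ∈ Finset.range i, (1 - x k) = 1 - S i := by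
    intro i
    induction i with
    | zero => intro _; simp [hSdef]
    | succ i ih =>
      intro hi
      have hiN : i < N := by omega
      rw [Finset.prod_range_succ, ih (by omega)]
      have hne : (1 - S i) ≠ 0 := ne_of_gt (hres0 i hiN)
      have hx : x i = p i / (1 - S i) := rfl
      have hSsucc : S (i+1) = S i + p i := by rw [hSdef]; simp [Finset.sum_range_succ]
      have hxp : x i * (1 - S i) = p i := by rw [hx]; exact div_mul_cancel₀ _ hne
      field_simp [hx]
      rw [hSsucc]; linear_combination (-1 : ℝ) * hxp
  -- gamma
  have hrangeNe : (Finset.range N).Nonempty := Finset.nonempty_range_iff.mpr (by omega)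
  set m : ℝ := (Finset.range N).inf' hrangeNe (fun i => min (x i) (1 - x i)) with hmdef
  have hm0 : 0 < m := by
    rw [hmdef, Finset.lt_inf'_iff]
    intro i hi
    have hi' := Finset.mem_range.mp hi
    exact lt_min (hx0 i hi') (by linarith [hx1 i hi'])
  have hmle : ∀ i < N, m ≤ min (x i) (1 - x i) := by
    intro i hi
    exact Finset.inf'_le _ (Finset.mem_range.mpr hi)
  set γ : ℝ := min (δ/(4*(N+1))) (m/2) with hγdef
  have hγ0 : 0 < γ := lt_min (by positivity) (by linarith)
  have hγm : γ < m := lt_of_le_of_lt (min_le_right _ _) (by linarith)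
  have hγx : ∀ i < N, γ < x i := fun i hi =>
    lt_of_lt_of_le hγm (le_trans (hmle i hi) (min_le_left _ _))
  have hγ1x : ∀ i < N, γ < 1 - x i := fun i hi =>
    lt_of_lt_of_le hγm (le_trans (hmle i hi) (min_le_right _ _))
  have hγδ : ((N:ℝ)+1)*γ ≤ δ/4 := by
    have h1 : γ ≤ δ/(4*(N+1)) := min_le_left _ _
    have hden : (0:ℝ) < 4*((N:ℝ)+1) := by positivity
    rw [← le_div_iff₀' (by positivity : (0:ℝ) < (N:ℝ)+1)]
    calc γ ≤ δ/(4*(N+1)) := h1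
      _ = δ/4/((N:ℝ)+1) := by rw [div_div]
  -- the intersection event
  set sets : ℕ → Set ℝ := fun i => Set.Ioo (x i - γ) (x i + γ) with hsetsdef
  have hsub : (⋂ i ∈ Finset.range N, X i ⁻¹' sets i) ⊆
      {ω | ∀ j, η j - δ < stick X (idx j) ω} := by
    intro ω hω
    have hωi : ∀ i < N, x i - γ < X i ω ∧ X i ω < x i + γ := by
      intro i hi
      have := Set.mem_iInter₂.mp hω i (Finset.mem_range.mpr hi)
      exact ⟨this.1, this.2⟩
    intro j
    set M := idx j with hMdef
    have hMN : M < N := hidxN j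
    -- product lower bound
    have hprod1 : ∏ i ∈ Finset.range M, ((1 - x i) - γ) ≤ ∏ i ∈ Finset.range M, (1 - X i ω) := by
      apply Finset.prod_le_prod
      · intro i hi
        have hiN : i < N := by have := Finset.mem_range.mp hi; omega
        linarith [hγ1x i hiN]
      · intro i hi
        have hiN : i < N := by have := Finset.mem_range.mp hi; omega
        linarith [(hωi i hiN).2]
    have hprod2 : ∏ i ∈ Finset.range M, (1 - x i) - M * γ
        ≤ ∏ i ∈ Finset.range M, ((1 - x i) - γ) := by
      apply prod_shave
      · exact le_of_lt hγ0
      · intro i hi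
        have hiN : i < N := by omega
        constructor
        · linarith [hγ1x i hiN]
        · have := hx0 i hiN; linarith
    have hPid : ∏ i ∈ Finset.range M, (1 - x i) = 1 - S M := hprodId M (le_of_lt hMN)
    have hB0 : 0 < ∏ i ∈ Finset.range M, (1 - X i ω) := by
      apply Finset.prod_pos
      intro i hi
      have hiN : i < N := by have := Finset.mem_range.mp hi; omega
      have := (hωi i hiN).2
      linarith [hγ1x i hiN]
    have hXM : x M - γ < X M ω := (hωi M hMN).1
    have hxMγ : 0 ≤ x M - γ := le_of_lt (by linarith [hγx M hMN])
    have hstick : (x M - γ) * (∏ i ∈ Finset.range M, (1 - x i) - M * γ) < stick X M ω := by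
      have h1 : (x M - γ) * (∏ i ∈ Finset.range M, (1 - x i) - M * γ)
          ≤ (x M - γ) * (∏ i ∈ Finset.range M, (1 - X i ω)) := by
        apply mul_le_mul_of_nonneg_left _ hxMγ
        linarith
      have h2 : (x M - γ) * (∏ i ∈ Finset.range M, (1 - X i ω))
          < X M ω * ∏ i ∈ Finset.range M, (1 - X i ω) :=
        mul_lt_mul_of_pos_right hXM hB0
      rw [stick]
      linarith
    -- arithmetic
    have hP0 : 0 ≤ 1 - S M := le_of_lt (hres0 M hMN)
    have hP1 : 1 - S M ≤ 1 := by linarith [hSnn M]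
    have hxM0 : 0 < x M := hx0 M hMN
    have hxM1 : x M < 1 := hx1 M hMN
    have hxP : x M * (1 - S M) = p M := by
      rw [hxdef]
      exact div_mul_cancel₀ _ (ne_of_gt (hres0 M hMN))
    have hMγ : (M:ℝ) * γ ≤ ((N:ℝ)) * γ := by
      apply mul_le_mul_of_nonneg_right _ (le_of_lt hγ0)
      exact_mod_cast Nat.cast_le.mpr (le_of_lt hMN)
    have hkey : p M - (((M:ℝ)) + 1) * γ
        ≤ (x M - γ) * (∏ i ∈ Finset.range M, (1 - x i) - (M:ℝ) * γ) := by
      rw [hPid, ← hxP]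
      exact key_ineq _ _ _ _ hγ0 hxM0 hxM1 hP0 hP1 (Nat.cast_nonneg _)
    have hfin : η j - δ < p M - (((M:ℝ)) + 1) * γ := by
      have h1 : (((M:ℝ)) + 1) * γ ≤ (((N:ℝ)) + 1) * γ := by
        apply mul_le_mul_of_nonneg_right _ (le_of_lt hγ0)
        have : (M:ℝ) ≤ (N:ℝ) := by exact_mod_cast le_of_lt hMN
        linarith
      have h2 := hpidx j
      have h3 : d ≤ δ/2 := hdδ
      have h4 := hγδ
      linarith
    exact lt_of_lt_of_le (lt_of_lt_of_le hfin (le_of_lt (lt_of_le_of_lt hkey hstick))) (le_refl _)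
  -- probability of the intersection
  have hmeasSet : ∀ i, i ∈ Finset.range N → MeasurableSet (sets i) :=
    fun i _ => measurableSet_Ioo
  have hInt := hXiid.measure_inter_preimage_eq_mul (Finset.range N) hmeasSet
  have hpos : ∀ i ∈ Finset.range N, 0 < Pr (X i ⁻¹' sets i) := by
    intro i hi
    have hiN := Finset.mem_range.mp hi
    have hmap : Pr (X i ⁻¹' sets i) = beta1 θ (sets i) := by
      rw [← hXlaw i, Measure.map_apply (hXmeas i) measurableSet_Ioo]
    rw [hmap]
    apply beta1_pos hθ
    · linarith [hγx i hiN]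
    · linarith [hγ0]
    · linarith [hγ1x i hiN]
  have hprodpos : 0 < Pr (⋂ i ∈ Finset.range N, X i ⁻¹' sets i) := by
    rw [hInt]
    exact CanonicallyOrderedAdd.prod_pos.mpr hpos
  exact lt_of_lt_of_le hprodpos (measure_mono hsub)
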